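/- Let A be a deterministic complete finite automaton and ≡ a stable pair congruence on its states. If the quotient automaton B = A/≡ has a synchronizing word, and for every pair of states p, q of A with p ≡ q the pair (p,q) is stable in A, then A itself has a synchronizing word. -/
import Mathlib


def dcaRun {Q A : Type*} (δ : Q → A → Q) (p : Q) (w : List A) : Q := w.foldl δ p

def Synchronizable {Q A : Type*} (δ : Q → A → Q) (p q : Q) : Prop :=
  ∃ w : List A, dcaRun δ p w = dcaRun δ q w

def StablePair {Q A : Type*} (δ : Q → A → Q) (p q : Q) : Prop :=
  ∀ u : List A, Synchronizable δ (dcaRun δ p u) (dcaRun δ q u)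

lemma dcaRun_append {Q A : Type*} (δ : Q → A → Q) (p : Q) (u v : List A) :
    dcaRun δ p (u ++ v) = dcaRun δ (dcaRun δ p u) v := by
  simp [dcaRun, List.foldl_append]

lemma dcaRun_cong {Q A : Type*} (δ : Q → A → Q) (s : Setoid Q)
    (hcong : ∀ (a : A) (p q : Q), s.r p q → s.r (δ p a) (δ q a)) :
    ∀ (w : List A) (p q : Q), s.r p q → s.r (dcaRun δ p w) (dcaRun δ q w) := by
  intro w
  induction w with
  | nil => intro p q h; exact h
  | cons a w ih => intro p q h; exact ih _ _ (hcong a p q h)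

lemma dcaRun_quot {Q A : Type*} (δ : Q → A → Q) (s : Setoid Q)
    (δq : Quotient s → A → Quotient s)
    (hδq : ∀ (p : Q) (a : A), δq ⟦p⟧ a = ⟦δ p a⟧) :
    ∀ (w : List A) (p : Q), dcaRun δq ⟦p⟧ w = ⟦dcaRun δ p w⟧ := by
  intro w
  induction w with
  | nil => intro p; rfl
  | cons a w ih =>
      intro p
      show dcaRun δq (δq ⟦p⟧ a) w = _
      rw [hδq]; exact ih (δ p a)

lemma collapse {Q A : Type*} (δ : Q → A → Q) (s : Setoid Q) [DecidableEq Q]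
    (hcong : ∀ (a : A) (p q : Q), s.r p q → s.r (δ p a) (δ q a))
    (hstable : ∀ p q : Q, s.r p q → StablePair δ p q) :
    ∀ (n : ℕ) (S : Finset Q), S.card ≤ n → (∀ p ∈ S, ∀ q ∈ S, s.r p q) →
      ∃ v : List A, ∀ p ∈ S, ∀ q ∈ S, dcaRun δ p v = dcaRun δ q v := by
  intro n
  induction n with
  | zero =>
      intro S hcard _
      refine ⟨[], fun p hp q hq => ?_⟩
      simp [Finset.card_eq_zero.mp (Nat.le_zero.mp hcard)] at hp
  | succ n ih =>
      intro S hcard hpair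
      by_cases h1 : S.card ≤ 1
      · refine ⟨[], fun p hp q hq => ?_⟩
        rw [Finset.card_le_one.mp h1 p hp q hq]
      · push_neg at h1
        obtain ⟨p, hp, q, hq, hpq⟩ := Finset.one_lt_card.mp h1
        obtain ⟨v0, hv0⟩ := hstable p q (hpair p hp q hq) []
        simp only [dcaRun] at hv0
        have hv0' : dcaRun δ p v0 = dcaRun δ q v0 := hv0
        set S' : Finset Q := (S.erase q).image (fun x => dcaRun δ x v0) with hS'
        have hcard' : S'.card ≤ n := by
          calc S'.card ≤ (S.erase q).card := Finset.card_image_le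
            _ = S.card - 1 := Finset.card_erase_of_mem hq
            _ ≤ n := by omega
        have hpair' : ∀ a ∈ S', ∀ b ∈ S', s.r a b := by
          intro a ha b hb
          obtain ⟨x, hx, rfl⟩ := Finset.mem_image.mp ha
          obtain ⟨y, hy, rfl⟩ := Finset.mem_image.mp hb
          exact dcaRun_cong δ s hcong v0 x y
            (hpair x (Finset.mem_of_mem_erase hx) y (Finset.mem_of_mem_erase hy))
        obtain ⟨v1, hv1⟩ := ih S' hcard' hpair'
        have hmem : ∀ x ∈ S, dcaRun δ x v0 ∈ S' := by
          intro x hx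
          by_cases hxq : x = q
          · subst hxq
            rw [← hv0']
            exact Finset.mem_image_of_mem _ (Finset.mem_erase.mpr ⟨hpq, hp⟩)
          · exact Finset.mem_image_of_mem _ (Finset.mem_erase.mpr ⟨hxq, hx⟩)
        refine ⟨v0 ++ v1, fun a ha b hb => ?_⟩
        rw [dcaRun_append, dcaRun_append]
        exact hv1 _ (hmem a ha) _ (hmem b hb)

/-- If the quotient of an automaton by a stable pair congruence has a
synchronizing word, then the automaton itself has a synchronizing word. -/
theorem sync_of_quotient_sync {Q A : Type*} [Fintype Q] (δ : Q → A → Q)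
    (s : Setoid Q)
    (hcong : ∀ (a : A) (p q : Q), s.r p q → s.r (δ p a) (δ q a))
    (hstable : ∀ p q : Q, s.r p q → StablePair δ p q)
    (δq : Quotient s → A → Quotient s)
    (hδq : ∀ (p : Q) (a : A), δq ⟦p⟧ a = ⟦δ p a⟧)
    (hsyncB : ∃ w : List A, ∀ x y : Quotient s, dcaRun δq x w = dcaRun δq y w) :
    ∃ w : List A, ∀ p q : Q, dcaRun δ p w = dcaRun δ q w := by
  classical
  obtain ⟨w0, hw0⟩ := hsyncB
  set S : Finset Q := Finset.univ.image (fun p => dcaRun δ p w0) with hS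
  have hpair : ∀ a ∈ S, ∀ b ∈ S, s.r a b := by
    intro a ha b hb
    obtain ⟨x, _, rfl⟩ := Finset.mem_image.mp ha
    obtain ⟨y, _, rfl⟩ := Finset.mem_image.mp hb
    have := hw0 ⟦x⟧ ⟦y⟧
    rw [dcaRun_quot δ s δq hδq, dcaRun_quot δ s δq hδq] at this
    exact Quotient.exact this
  obtain ⟨v, hv⟩ := collapse δ s hcong hstable S.card S le_rfl hpair
  refine ⟨w0 ++ v, fun p q => ?_⟩
  rw [dcaRun_append, dcaRun_append]
  exact hv _ (Finset.mem_image_of_mem _ (Finset.mem_univ p)) _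
    (Finset.mem_image_of_mem _ (Finset.mem_univ q))
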